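/- Let λ > 0, Δt > 0 and set x = Δt√λ. Define the 2×2 real matrix G with rows [0, 1] and [2/(-Δt²λ - 2), (Δt²λ - 4)/(-Δt²λ - 2)]. Then the spectral radius of G is strictly less than 1. -/

import Mathlib

open Matrix Complex

/-- spectral radius of the P¹-DG matrix with s = 0 is < 1. -/
theorem stmt_1 (lam Δt : ℝ) (hlam : 0 < lam) (hΔt : 0 < Δt)
    (G : Matrix (Fin 2) (Fin 2) ℂ)
    (hG : G = !![0, 1;
      (((2) / (-(Δt ^ 2 * lam) - 2) : ℝ) : ℂ),
      (((Δt ^ 2 * lam - 4) / (-(Δt ^ 2 * lam) - 2) : ℝ) : ℂ)]) :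
    ∀ μ : ℂ, (G - μ • (1 : Matrix (Fin 2) (Fin 2) ℂ)).det = 0 → ‖μ‖ < 1 := by
  intro μ hdet
  subst hG
  simp [Matrix.det_fin_two, Matrix.one_apply] at hdet
  have hy0 : 0 < Δt ^ 2 * lam := by positivity
  have hden2 : ((-((Δt:ℂ) ^ 2 * (lam:ℂ))) - 2) ≠ 0 := by
    intro h
    have : ((-(Δt ^ 2 * lam) - 2 : ℝ) : ℂ) = 0 := by push_cast; rw [← h]
    rw [Complex.ofReal_eq_zero] at this
    nlinarith
  have hden3 : ((Δt:ℂ) ^ 2 * (lam:ℂ) + 2) ≠ 0 := by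
    intro h; apply hden2
    rw [show (-((Δt:ℂ)^2*(lam:ℂ)) - 2) = -((Δt:ℂ)^2*(lam:ℂ)+2) by ring, h, neg_zero]
  field_simp [hden2] at hdet
  have E : (((Δt:ℂ)^2*(lam:ℂ)+2)*μ^2 + ((Δt:ℂ)^2*(lam:ℂ)-4)*μ + 2) = 0 := by
    have h2 : (((Δt:ℂ)^2*(lam:ℂ)+2)*μ^2 + ((Δt:ℂ)^2*(lam:ℂ)-4)*μ + 2) * ((Δt:ℂ)^2*(lam:ℂ)+2) = 0 := by
      linear_combination (-((Δt:ℂ)^2*(lam:ℂ)+2)) * hdet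
    rcases mul_eq_zero.1 h2 with h | h
    · exact h
    · exact absurd h hden3
  obtain ⟨h1, h2⟩ := Complex.ext_iff.1 E
  simp [Complex.mul_re, Complex.mul_im, pow_two] at h1 h2
  set a : ℝ := μ.re with ha
  set b : ℝ := μ.im with hb
  set y : ℝ := Δt * Δt * lam with hy
  have hy0' : 0 < y := by rw [hy]; positivity
  -- reduce goal to a*a + b*b < 1
  have habs : ‖μ‖ = Real.sqrt (a * a + b * b) := by
    rw [Complex.norm_def, Complex.normSq_apply]
  suffices hsum : a * a + b * b < 1 by
    have h0 : 0 ≤ a * a + b * b := add_nonneg (mul_self_nonneg a) (mul_self_nonneg b)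
    have hlt := Real.sqrt_lt_sqrt h0 hsum
    rwa [Real.sqrt_one, ← habs] at hlt
  -- factor h2
  have h2' : b * (2 * (y + 2) * a + (y - 4)) = 0 := by linear_combination h2
  rcases mul_eq_zero.1 h2' with hb0 | hkey
  · -- real eigenvalue
    rw [hb0]
    have h1' : (y + 2) * (a * a) + (y - 4) * a + 2 = 0 := by
      rw [hb0] at h1; linear_combination h1
    have hylarge : y * (y - 16) ≥ 0 := by nlinarith [sq_nonneg (2 * (y + 2) * a + (y - 4))]
    have hy16 : 16 ≤ y := by nlinarith
    have haneg : a < 0 := by nlinarith [sq_nonneg a]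
    have hagt : -1 < a := by
      by_contra hle
      push_neg at hle
      nlinarith [sq_nonneg (a + 1)]
    nlinarith
  · -- complex pair
    have key : (y + 2) * (a * a + b * b) = 2 := by linear_combination (-1) * h1 + a * hkey
    nlinarith
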